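/- Let a, b, c ∈ ℂ with c not a nonpositive integer. Then there is an open neighborhood U of 0 in ℂ such that the function g(x) = ₂F₁(a, b; c; x²) satisfies Heun's differential equation with parameters (t, q; a', b'; c'; d') = (-1, 0; 2a, 2b; 2c-1; a+b-c+1) at every x ∈ U with x ∉ {0, 1, -1}. -/

import Mathlib

open Complex Nat FormalMultilinearSeries

section HG
variable (a b c : ℂ)

local notation "C" => ordinaryHypergeometricCoefficient a b c

lemma hg_rec (hc : ∀ n : ℕ, c ≠ -(n : ℂ)) (n : ℕ) :
    ((n:ℂ)+1) * ((n:ℂ)+c) * C (n+1) = ((n:ℂ)+a) * ((n:ℂ)+b) * C n := by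
  have hcn : (n:ℂ) + c ≠ 0 := fun h => hc n (by linear_combination h)
  have hn1 : ((n:ℂ) + 1) ≠ 0 := Nat.cast_add_one_ne_zero n
  have key : C (n+1)
      = ((n:ℂ)+1)⁻¹ * ((n:ℂ)+c)⁻¹ * (((n:ℂ)+a) * ((n:ℂ)+b)) * C n := by
    unfold ordinaryHypergeometricCoefficient
    rw [ascPochhammer_succ_eval, ascPochhammer_succ_eval, ascPochhammer_succ_eval,
      Nat.factorial_succ]
    push_cast
    rw [mul_inv, mul_inv]
    ring
  rw [key]
  field_simp

lemma hg_radius (hc : ∀ n : ℕ, c ≠ -(n : ℂ)) :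
    1 ≤ (ordinaryHypergeometricSeries ℂ a b c).radius := by
  by_cases h : ∃ k : ℕ, (k:ℂ) = -a ∨ (k:ℂ) = -b
  · obtain ⟨k, hk | hk⟩ := h
    · have : a = -(k:ℂ) := by linear_combination hk
      rw [this, ordinaryHypergeometric_radius_top_of_neg_nat₁]
      exact le_top
    · have : b = -(k:ℂ) := by linear_combination hk
      rw [this, ordinaryHypergeometric_radius_top_of_neg_nat₂]
      exact le_top
  · push_neg at h
    rw [ordinaryHypergeometricSeries_radius_eq_one]
    intro k
    exact ⟨(h k).1, (h k).2, fun hk => hc k (by linear_combination hk)⟩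

lemma hg_summable34 (hc : ∀ n : ℕ, c ≠ -(n : ℂ)) :
    Summable fun n => ‖C n‖ * (3/4:ℝ)^n := by
  have h := (ordinaryHypergeometricSeries ℂ a b c).summable_norm_mul_pow
    (r := 3/4) (lt_of_lt_of_le
      (by rw [ENNReal.coe_lt_one_iff, ← NNReal.coe_lt_coe]; push_cast; norm_num)
      (hg_radius a b c hc))
  convert h using 2 with n
  rw [ordinaryHypergeometricSeries, ofScalars_norm]
  norm_num

lemma hg_summable_poly (hc : ∀ n : ℕ, c ≠ -(n : ℂ)) (k : ℕ) :
    Summable fun n : ℕ => (n:ℝ)^k * (‖C n‖ * (1/2:ℝ)^n) := by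
  have hs := hg_summable34 a b c hc
  set M := ∑' n, ‖C n‖ * (3/4:ℝ)^n with hM
  have hle : ∀ n, ‖C n‖ * (3/4:ℝ)^n ≤ M :=
    fun n => hs.le_tsum n (fun m _ => by positivity)
  refine Summable.of_nonneg_of_le (fun n => by positivity) (fun n => ?_)
    (((summable_pow_mul_geometric_of_norm_lt_one k (r := (2/3:ℝ)) (by norm_num)).mul_left M))
  calc (n:ℝ)^k * (‖C n‖ * (1/2:ℝ)^n)
      = (‖C n‖ * (3/4:ℝ)^n) * ((n:ℝ)^k * (2/3:ℝ)^n) := by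
        rw [show ((1:ℝ)/2) = (3/4) * (2/3) by norm_num, mul_pow]; ring
    _ ≤ M * ((n:ℝ)^k * (2/3:ℝ)^n) :=
        mul_le_mul_of_nonneg_right (hle n) (by positivity)

lemma hg_pow1 {z : ℂ} (hz : ‖z‖ ≤ 1/2) (n : ℕ) : ‖z‖^(n-1) ≤ 2*(1/2:ℝ)^n := by
  match n with
  | 0 => simp
  | (n+1) =>
    simp only [Nat.add_sub_cancel, pow_succ]
    calc ‖z‖^n ≤ (1/2:ℝ)^n := pow_le_pow_left₀ (norm_nonneg _) hz n
      _ ≤ 2*((1/2:ℝ)^n * (1/2)) := by nlinarith [pow_nonneg (by norm_num : (0:ℝ) ≤ 1/2) n]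

lemma hg_pow2 {z : ℂ} (hz : ‖z‖ ≤ 1/2) (n : ℕ) : ‖z‖^(n-2) ≤ 4*(1/2:ℝ)^n := by
  match n with
  | 0 => simp
  | 1 => simpa using by nlinarith [norm_nonneg z]
  | (n+2) =>
    simp only [Nat.add_sub_cancel, pow_succ]
    calc ‖z‖^n ≤ (1/2:ℝ)^n := pow_le_pow_left₀ (norm_nonneg _) hz n
      _ ≤ 4*((1/2:ℝ)^n * (1/2) * (1/2)) := by nlinarith [pow_nonneg (by norm_num : (0:ℝ) ≤ 1/2) n]

lemma hg_bound1 {z : ℂ} (hz : ‖z‖ ≤ 1/2) (n : ℕ) :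
    ‖(n:ℂ) * C n * z^(n-1)‖ ≤ 2*((n:ℝ)^1*(‖C n‖*(1/2:ℝ)^n)) := by
  rw [norm_mul, norm_mul, norm_pow, Complex.norm_natCast]
  calc (n:ℝ) * ‖C n‖ * ‖z‖^(n-1) ≤ (n:ℝ) * ‖C n‖ * (2*(1/2:ℝ)^n) := by
        gcongr; exact hg_pow1 hz n
    _ = 2*((n:ℝ)^1*(‖C n‖*(1/2:ℝ)^n)) := by ring

lemma hg_bound2 {z : ℂ} (hz : ‖z‖ ≤ 1/2) (n : ℕ) :
    ‖(n:ℂ) * ((n:ℂ)-1) * C n * z^(n-2)‖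
      ≤ 4*((n:ℝ)^2*(‖C n‖*(1/2:ℝ)^n)) + 4*((n:ℝ)^1*(‖C n‖*(1/2:ℝ)^n)) := by
  rw [norm_mul, norm_mul, norm_mul, norm_pow, Complex.norm_natCast]
  have h1 : ‖(n:ℂ)-1‖ ≤ (n:ℝ)+1 := by
    calc ‖(n:ℂ)-1‖ ≤ ‖(n:ℂ)‖ + ‖(1:ℂ)‖ := norm_sub_le _ _
      _ = (n:ℝ)+1 := by simp
  calc (n:ℝ) * ‖(n:ℂ)-1‖ * ‖C n‖ * ‖z‖^(n-2)
      ≤ (n:ℝ) * ((n:ℝ)+1) * ‖C n‖ * (4*(1/2:ℝ)^n) := by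
        gcongr
        exact hg_pow2 hz n
    _ = 4*((n:ℝ)^2*(‖C n‖*(1/2:ℝ)^n)) + 4*((n:ℝ)^1*(‖C n‖*(1/2:ℝ)^n)) := by ring

lemma hg_boundA {z : ℂ} (hz : ‖z‖ ≤ 1/2) (n : ℕ) :
    ‖(n:ℂ) * ((n:ℂ)-1+c) * C n * z^(n-1)‖
      ≤ 2*((n:ℝ)^2*(‖C n‖*(1/2:ℝ)^n)) + (2*(1+‖c‖))*((n:ℝ)^1*(‖C n‖*(1/2:ℝ)^n)) := by
  rw [norm_mul, norm_mul, norm_mul, norm_pow, Complex.norm_natCast]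
  have h1 : ‖(n:ℂ)-1+c‖ ≤ (n:ℝ)+1+‖c‖ := by
    calc ‖(n:ℂ)-1+c‖ ≤ ‖(n:ℂ)-1‖ + ‖c‖ := norm_add_le _ _
      _ ≤ (‖(n:ℂ)‖ + ‖(1:ℂ)‖) + ‖c‖ := by gcongr; exact norm_sub_le _ _
      _ = (n:ℝ)+1+‖c‖ := by simp
  calc (n:ℝ) * ‖(n:ℂ)-1+c‖ * ‖C n‖ * ‖z‖^(n-1)
      ≤ (n:ℝ) * ((n:ℝ)+1+‖c‖) * ‖C n‖ * (2*(1/2:ℝ)^n) := by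
        gcongr
        exact hg_pow1 hz n
    _ = _ := by ring

lemma hg_ball_norm {y : ℂ} (hy : y ∈ Metric.ball (0:ℂ) (1/2)) : ‖y‖ ≤ 1/2 := by
  rw [mem_ball_zero_iff] at hy
  exact hy.le

variable (hc : ∀ n : ℕ, c ≠ -(n : ℂ))
include hc

lemma hg_sum0 {z : ℂ} (hz : ‖z‖ ≤ 1/2) : Summable fun n : ℕ => C n * z^n := by
  refine Summable.of_norm_bounded (hg_summable_poly a b c hc 0) (fun n => ?_)
  rw [norm_mul, norm_pow]
  calc ‖C n‖ * ‖z‖^n ≤ ‖C n‖ * (1/2:ℝ)^n := by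
        gcongr
    _ = (n:ℝ)^0 * (‖C n‖ * (1/2:ℝ)^n) := by ring

lemma hg_sum1 {z : ℂ} (hz : ‖z‖ ≤ 1/2) :
    Summable fun n : ℕ => (n:ℂ) * C n * z^(n-1) :=
  Summable.of_norm_bounded ((hg_summable_poly a b c hc 1).mul_left 2)
    (fun n => hg_bound1 a b c hz n)

lemma hg_sum2 {z : ℂ} (hz : ‖z‖ ≤ 1/2) :
    Summable fun n : ℕ => (n:ℂ) * ((n:ℂ)-1) * C n * z^(n-2) :=
  Summable.of_norm_bounded
    (((hg_summable_poly a b c hc 2).mul_left 4).add ((hg_summable_poly a b c hc 1).mul_left 4))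
    (fun n => hg_bound2 a b c hz n)

lemma hg_sumA {z : ℂ} (hz : ‖z‖ ≤ 1/2) :
    Summable fun n : ℕ => (n:ℂ) * ((n:ℂ)-1+c) * C n * z^(n-1) :=
  Summable.of_norm_bounded
    (((hg_summable_poly a b c hc 2).mul_left 2).add
      ((hg_summable_poly a b c hc 1).mul_left (2*(1+‖c‖))))
    (fun n => hg_boundA a b c hz n)

lemma hg_hasDerivAt1 {z : ℂ} (hz : z ∈ Metric.ball (0:ℂ) (1/2)) :
    HasDerivAt (fun w => ∑' n : ℕ, C n * w^n) (∑' n : ℕ, (n:ℂ) * C n * z^(n-1)) z := by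
  refine hasDerivAt_tsum_of_isPreconnected
    (g' := fun (n : ℕ) (y : ℂ) => (n:ℂ) * C n * y^(n-1))
    ((hg_summable_poly a b c hc 1).mul_left 2) Metric.isOpen_ball
    (convex_ball _ _).isPreconnected
    (fun n y _ => ?_)
    (fun n y hy => hg_bound1 a b c (hg_ball_norm hy) n)
    (Metric.mem_ball_self (by norm_num)) ?_ hz
  · have h := (hasDerivAt_pow n y).const_mul (C n)
    convert h using 1 <;> try rfl
    ring
  · refine summable_of_ne_finset_zero (s := {0}) (fun n hn => ?_)
    simp only [Finset.mem_singleton] at hn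
    simp [zero_pow hn]

lemma hg_hasDerivAt2 {z : ℂ} (hz : z ∈ Metric.ball (0:ℂ) (1/2)) :
    HasDerivAt (fun w => ∑' n : ℕ, (n:ℂ) * C n * w^(n-1))
      (∑' n : ℕ, (n:ℂ) * ((n:ℂ)-1) * C n * z^(n-2)) z := by
  refine hasDerivAt_tsum_of_isPreconnected
    (g' := fun (n : ℕ) (y : ℂ) => (n:ℂ) * ((n:ℂ)-1) * C n * y^(n-2))
    (((hg_summable_poly a b c hc 2).mul_left 4).add ((hg_summable_poly a b c hc 1).mul_left 4))
    Metric.isOpen_ball (convex_ball _ _).isPreconnected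
    (fun n y _ => ?_)
    (fun n y hy => hg_bound2 a b c (hg_ball_norm hy) n)
    (Metric.mem_ball_self (by norm_num)) ?_ hz
  · match n with
    | 0 =>
      simpa using hasDerivAt_const y ((0:ℂ) * C 0 * 1)
    | (n+1) =>
      have h := (hasDerivAt_pow n y).const_mul (((n+1:ℕ):ℂ) * C (n+1))
      convert h using 1 <;> try rfl
      show ((n+1:ℕ):ℂ) * (((n+1:ℕ):ℂ)-1) * C (n+1) * y^(n-1) = _
      push_cast
      ring
  · refine summable_of_ne_finset_zero (s := {0, 1}) (fun n hn => ?_)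
    simp only [Finset.mem_insert, Finset.mem_singleton] at hn
    push_neg at hn
    have : n - 1 ≠ 0 := by omega
    simp [zero_pow this]

lemma hg_ode {z : ℂ} (hz : z ∈ Metric.ball (0:ℂ) (1/2)) :
    z*(1-z) * (∑' n : ℕ, (n:ℂ) * ((n:ℂ)-1) * C n * z^(n-2))
      + (c-(a+b+1)*z) * (∑' n : ℕ, (n:ℂ) * C n * z^(n-1))
      - a*b * (∑' n : ℕ, C n * z^n) = 0 := by
  have hz' : ‖z‖ ≤ 1/2 := hg_ball_norm hz
  have s0 := hg_sum0 a b c hc hz'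
  have s1 := hg_sum1 a b c hc hz'
  have s2 := hg_sum2 a b c hc hz'
  have sA := hg_sumA a b c hc hz'
  have hAB : ∀ n : ℕ, ((n+1:ℕ):ℂ) * (((n+1:ℕ):ℂ)-1+c) * C (n+1) * z^((n+1)-1)
      = ((n:ℂ)+a) * ((n:ℂ)+b) * C n * z^n := by
    intro n
    have h := hg_rec a b c hc n
    simp only [Nat.add_sub_cancel]
    push_cast
    linear_combination z^n * h
  have sB : Summable (fun n : ℕ => ((n:ℂ)+a) * ((n:ℂ)+b) * C n * z^n) := by
    refine ((summable_nat_add_iff 1).2 sA).congr (fun n => ?_)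
    exact hAB n
  have key : ∀ n : ℕ,
      z*(1-z) * ((n:ℂ) * ((n:ℂ)-1) * C n * z^(n-2))
        + (c-(a+b+1)*z) * ((n:ℂ) * C n * z^(n-1))
      = (n:ℂ) * ((n:ℂ)-1+c) * C n * z^(n-1) + a*b * (C n * z^n)
          - (((n:ℂ)+a) * ((n:ℂ)+b) * C n * z^n) := by
    intro n
    match n with
    | 0 => push_cast; ring_nf
    | 1 => push_cast; ring_nf
    | (n+2) =>
      simp only [Nat.add_sub_cancel]
      push_cast
      ring
  have e2 : z*(1-z) * (∑' n : ℕ, (n:ℂ) * ((n:ℂ)-1) * C n * z^(n-2))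
      = ∑' n : ℕ, z*(1-z) * ((n:ℂ) * ((n:ℂ)-1) * C n * z^(n-2)) := tsum_mul_left.symm
  have e1 : (c-(a+b+1)*z) * (∑' n : ℕ, (n:ℂ) * C n * z^(n-1))
      = ∑' n : ℕ, (c-(a+b+1)*z) * ((n:ℂ) * C n * z^(n-1)) := tsum_mul_left.symm
  have e0 : a*b * (∑' n : ℕ, C n * z^n) = ∑' n : ℕ, a*b * (C n * z^n) := tsum_mul_left.symm
  rw [e2, e1, e0, ← Summable.tsum_add (s2.mul_left _) (s1.mul_left _)]
  rw [show (∑' n : ℕ, (z*(1-z) * ((n:ℂ) * ((n:ℂ)-1) * C n * z^(n-2))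
        + (c-(a+b+1)*z) * ((n:ℂ) * C n * z^(n-1))))
      = ∑' n : ℕ, ((n:ℂ) * ((n:ℂ)-1+c) * C n * z^(n-1) + a*b * (C n * z^n)
          - (((n:ℂ)+a) * ((n:ℂ)+b) * C n * z^n)) from tsum_congr key]
  rw [Summable.tsum_sub ((sA.add (s0.mul_left (a*b)))) sB, Summable.tsum_add sA (s0.mul_left (a*b))]
  have hA0 : (∑' n : ℕ, (n:ℂ) * ((n:ℂ)-1+c) * C n * z^(n-1))
      = ∑' n : ℕ, ((n:ℂ)+a) * ((n:ℂ)+b) * C n * z^n := by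
    rw [Summable.tsum_eq_zero_add sA]
    simp only [Nat.cast_zero, zero_mul, zero_add]
    exact tsum_congr hAB
  rw [hA0]
  ring

end HG


open Complex

/-- `g` satisfies Heun's differential equation with parameters `(t, q; a, b; c; d)`
at the point `x`: `g` is twice complex differentiable at `x` and
`g''(x) + (c/x + d/(x-1) + (a+b-c-d+1)/(x-t)) g'(x) + ((a b x - q)/(x(x-1)(x-t))) g(x) = 0`. -/
def SatisfiesHeunAt (t q a b c d : ℂ) (g : ℂ → ℂ) (x : ℂ) : Prop :=
  DifferentiableAt ℂ g x ∧ DifferentiableAt ℂ (deriv g) x ∧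
    deriv (deriv g) x +
      (c / x + d / (x - 1) + (a + b - c - d + 1) / (x - t)) * deriv g x +
      ((a * b * x - q) / (x * (x - 1) * (x - t))) * g x = 0

theorem stmt4 (a b c : ℂ) (hc : ∀ n : ℕ, c ≠ -(n : ℂ)) :
    ∃ U : Set ℂ, IsOpen U ∧ (0 : ℂ) ∈ U ∧ ∀ x ∈ U, x ≠ (0 : ℂ) → x ≠ (1 : ℂ) → x ≠ (-1 : ℂ) →
      SatisfiesHeunAt (-1) (0) (2*a) (2*b) (2*c - 1) (a + b - c + 1)
        (fun x : ℂ => ordinaryHypergeometric a b c (x^2)) x := by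
  set C := ordinaryHypergeometricCoefficient a b c with hC
  set G : ℂ → ℂ := fun x => ∑' n : ℕ, C n * (x^2)^n with hG
  set F1 : ℂ → ℂ := fun w => ∑' n : ℕ, (n:ℂ) * C n * w^(n-1) with hF1
  set F2 : ℂ → ℂ := fun w => ∑' n : ℕ, (n:ℂ) * ((n:ℂ)-1) * C n * w^(n-2) with hF2
  have hfun : (fun x : ℂ => ordinaryHypergeometric a b c (x^2)) = G := by
    funext w
    rw [ordinaryHypergeometric, ordinaryHypergeometric_sum_eq]
    simp only [smul_eq_mul, hG, hC]
  rw [hfun]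
  set U := Metric.ball (0:ℂ) (1/2) with hU
  refine ⟨U, Metric.isOpen_ball, Metric.mem_ball_self (by norm_num), fun x hx hx0 hx1 hxm => ?_⟩
  have hsq : ∀ y ∈ U, y^2 ∈ Metric.ball (0:ℂ) (1/2) := by
    intro y hy
    rw [mem_ball_zero_iff] at hy ⊢
    rw [norm_pow]
    nlinarith [norm_nonneg y]
  have hsqd : ∀ y : ℂ, HasDerivAt (fun w : ℂ => w^2) (2*y) y := fun y => by
    simpa using hasDerivAt_pow 2 y
  -- first derivative of G on U
  have hgd : ∀ y ∈ U, HasDerivAt G (F1 (y^2) * (2*y)) y := by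
    intro y hy
    exact (hg_hasDerivAt1 a b c hc (hsq y hy)).comp y (hsqd y)
  -- second derivative
  have hD2 : HasDerivAt (fun y => F1 (y^2) * (2*y))
      ((F2 (x^2) * (2*x)) * (2*x) + F1 (x^2) * 2) x := by
    have h2x : HasDerivAt (fun y : ℂ => 2*y) 2 x := by
      simpa using (hasDerivAt_id x).const_mul (2:ℂ)
    exact ((hg_hasDerivAt2 a b c hc (hsq x hx)).comp x (hsqd x)).mul h2x
  have hEvEq : deriv G =ᶠ[nhds x] fun y => F1 (y^2) * (2*y) := by
    filter_upwards [Metric.isOpen_ball.mem_nhds hx] with y hy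
    exact (hgd y hy).deriv
  have hderiv1 : deriv G x = F1 (x^2) * (2*x) := (hgd x hx).deriv
  have hderiv2 : deriv (deriv G) x = (F2 (x^2) * (2*x)) * (2*x) + F1 (x^2) * 2 := by
    rw [hEvEq.deriv_eq]
    exact hD2.deriv
  refine ⟨(hgd x hx).differentiableAt, ?_, ?_⟩
  · rw [hEvEq.differentiableAt_iff]
    exact hD2.differentiableAt
  · rw [hderiv1, hderiv2]
    have hode := hg_ode a b c hc (hsq x hx)
    have h1 : x - 1 ≠ 0 := sub_ne_zero.2 hx1
    have hm : x + 1 ≠ 0 := fun h => hxm (by linear_combination h)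
    have hm' : x - (-1) ≠ 0 := by rw [sub_neg_eq_add]; exact hm
    show (F2 (x^2) * (2*x)) * (2*x) + F1 (x^2) * 2 +
        ((2*c-1)/x + (a+b-c+1)/(x-1) + (2*a+2*b-(2*c-1)-(a+b-c+1)+1)/(x-(-1)))
          * (F1 (x^2) * (2*x)) +
        ((2*a*(2*b)*x - 0)/(x*(x-1)*(x-(-1)))) * G x = 0
    have hGx : G x = ∑' n : ℕ, C n * (x^2)^n := rfl
    rw [hGx]
    field_simp
    linear_combination (-4*x) * hode
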